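/- Suppose f : (−1,1) → ℝ has the form f(x) = Σ_{l=0}^{k−1} c_l (x−α)^l + ∫_{[−1,1]} (x−α)^k/((1−λx)(1−λα)^k) dμ(λ) for some α ∈ (−1,1), real constants c_l, and a finite positive measure μ on [−1,1]. Then for all pairwise distinct x_1,…,x_{k+1} ∈ (−1,1), f^[k](x_1,…,x_{k+1}) = ∫_{[−1,1]} 1/∏_{i=1}^{k+1}(1−λx_i) dμ(λ); in particular all k-th divided differences of f are nonnegative. -/

import Mathlib

/-- Complete homogeneous symmetric function of degree `r` in variables `y 0, ..., y (n-1)`. -/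
noncomputable def hp : ℕ → ℕ → (ℕ → ℝ) → ℝ
  | 0, _, _ => 1
  | _ + 1, 0, _ => 0
  | r + 1, n + 1, y => hp (r + 1) n y + y n * hp r (n + 1) y
termination_by r n => (r, n)

theorem hp_zero (n : ℕ) (y : ℕ → ℝ) : hp 0 n y = 1 := by simp [hp]

theorem hp_succ (r n : ℕ) (y : ℕ → ℝ) :
    hp (r + 1) (n + 1) y = hp (r + 1) n y + y n * hp r (n + 1) y := by rw [hp]

theorem hp_one (r : ℕ) (y : ℕ → ℝ) : hp r 1 y = y 0 ^ r := by
  induction r with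
  | zero => simp [hp]
  | succ r ih => rw [hp_succ, ih]; simp [hp]; ring

theorem hpB (r n : ℕ) (y : ℕ → ℝ) :
    hp (r + 1) (n + 1) y = hp (r + 1) n (fun j => y (j + 1)) + y 0 * hp r (n + 1) y := by
  match n, r with
  | 0, r => simp [hp]
  | n + 1, 0 =>
    have ih := hpB 0 n y
    rw [hp_succ 0 (n+1) y, ih, hp_succ 0 n (fun j => y (j+1))]
    simp [hp_zero]; ring
  | n + 1, r + 1 =>
    have ih1 := hpB (r + 1) n y
    have ih2 := hpB r (n + 1) y
    rw [hp_succ (r+1) (n+1) y, ih1, hp_succ (r+1) n (fun j => y (j+1))]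
    have hA : hp (r+1) (n+2) y = hp (r+1) (n+1) y + y (n+1) * hp r (n+2) y := hp_succ r (n+1) y
    have hB : hp (r+1) (n+1) (fun j => y (j+1)) = hp (r+1) (n+2) y - y 0 * hp r (n+2) y := by
      rw [ih2]; ring
    rw [hB, hA]; ring
termination_by (r, n)

noncomputable def divDiff (f : ℝ → ℝ) : (k : ℕ) → (Fin (k + 1) → ℝ) → ℝ
  | 0, x => f (x 0)
  | k + 1, x =>
      (divDiff f k (fun i => x i.castSucc) - divDiff f k (fun i => x i.succ)) /
        (x 0 - x (Fin.last (k + 1)))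

theorem divDiff_succ (f : ℝ → ℝ) (k : ℕ) (x : Fin (k + 2) → ℝ) :
    divDiff f (k + 1) x =
      (divDiff f k (fun i => x i.castSucc) - divDiff f k (fun i => x i.succ)) /
        (x 0 - x (Fin.last (k + 1))) := rfl

theorem divDiff_eq_sum : ∀ (k : ℕ) (x : Fin (k + 1) → ℝ), ∃ w : Fin (k + 1) → ℝ,
    ∀ f : ℝ → ℝ, divDiff f k x = ∑ i, w i * f (x i) := by
  intro k
  induction k with
  | zero => exact fun x => ⟨fun _ => 1, fun f => by simp [divDiff]⟩
  | succ k ih =>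
    intro x
    obtain ⟨wf, hwf⟩ := ih (fun i => x i.castSucc)
    obtain ⟨wb, hwb⟩ := ih (fun i => x i.succ)
    refine ⟨fun i => ((Fin.snoc wf (0:ℝ) : Fin (k+2) → ℝ) i - (Fin.cons (0:ℝ) wb : Fin (k+2) → ℝ) i) / (x 0 - x (Fin.last (k + 1))),
      fun f => ?_⟩
    have h1 : ∑ i : Fin (k + 2), (Fin.snoc wf (0:ℝ) : Fin (k+2) → ℝ) i * f (x i)
        = ∑ i : Fin (k + 1), wf i * f (x i.castSucc) := by
      rw [Fin.sum_univ_castSucc]; simp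
    have h2 : ∑ i : Fin (k + 2), (Fin.cons (0:ℝ) wb : Fin (k+2) → ℝ) i * f (x i)
        = ∑ i : Fin (k + 1), wb i * f (x i.succ) := by
      rw [Fin.sum_univ_succ]; simp
    rw [divDiff_succ, hwf, hwb, ← h1, ← h2]
    simp only [div_mul_eq_mul_div, sub_mul, ← Finset.sum_div, Finset.sum_sub_distrib]

theorem divDiff_pow (α : ℝ) : ∀ (m l : ℕ) (y : ℕ → ℝ),
    (∀ i j : ℕ, i < j → j ≤ m → y i ≠ y j) →
    divDiff (fun t => (t - α) ^ l) m (fun i : Fin (m + 1) => y i.1) =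
      if m ≤ l then hp (l - m) (m + 1) (fun j => y j - α) else 0 := by
  intro m
  induction m with
  | zero =>
    intro l y hy
    simp [divDiff, hp_one]
  | succ m ih =>
    intro l y hy
    have hfront : (fun i : Fin (m + 1) => (fun i : Fin (m + 2) => y i.1) i.castSucc)
        = fun i : Fin (m + 1) => y i.1 := rfl
    have hback : (fun i : Fin (m + 1) => (fun i : Fin (m + 2) => y i.1) i.succ)
        = fun i : Fin (m + 1) => (fun j => y (j + 1)) i.1 := rfl
    rw [divDiff_succ, hfront, hback,
      ih l y (fun i j hij hj => hy i j hij (by omega)),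
      ih l (fun j => y (j + 1)) (fun i j hij hj => hy (i+1) (j+1) (by omega) (by omega))]
    simp only [Fin.val_last, Fin.val_zero]
    by_cases h1 : m + 1 ≤ l
    · have hml : m ≤ l := by omega
      rw [if_pos hml, if_pos hml, if_pos h1]
      have hr : l - m = (l - (m + 1)) + 1 := by omega
      set r := l - (m + 1) with hrdef
      rw [hr]
      have hA : hp (r + 1) (m + 2) (fun j => y j - α)
          = hp (r + 1) (m + 1) (fun j => y j - α)
            + (y (m + 1) - α) * hp r (m + 2) (fun j => y j - α) :=
        hp_succ r (m + 1) (fun j => y j - α)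
      have hBB : hp (r + 1) (m + 2) (fun j => y j - α)
          = hp (r + 1) (m + 1) (fun j => y (j + 1) - α)
            + (y 0 - α) * hp r (m + 2) (fun j => y j - α) :=
        hpB r (m + 1) (fun j => y j - α)
      have hne : y 0 - y (m + 1) ≠ 0 := sub_ne_zero.2 (hy 0 (m + 1) (by omega) le_rfl)
      have hnum : hp (r + 1) (m + 1) (fun j => y j - α)
          - hp (r + 1) (m + 1) (fun j => y (j + 1) - α)
          = (y 0 - y (m + 1)) * hp r (m + 2) (fun j => y j - α) := by
        have := hA.symm.trans hBB
        linarith [this]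
      rw [hnum, mul_comm, mul_div_assoc, div_self hne, mul_one]
    · by_cases h2 : m ≤ l
      · have : m = l := by omega
        rw [if_pos h2, if_pos h2, if_neg h1]
        subst this
        simp [hp_zero]
      · rw [if_neg h2, if_neg h2, if_neg h1]
        simp


theorem divDiff_geom (lam : ℝ) : ∀ (m : ℕ) (y : ℕ → ℝ),
    (∀ i j : ℕ, i < j → j ≤ m → y i ≠ y j) →
    (∀ i ≤ m, 1 - lam * y i ≠ 0) →
    divDiff (fun t => (1 - lam * t)⁻¹) m (fun i : Fin (m + 1) => y i.1) =
      lam ^ m * (∏ i : Fin (m + 1), (1 - lam * y i.1))⁻¹ := by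
  intro m
  induction m with
  | zero => intro y hy hb; simp [divDiff]
  | succ m ih =>
    intro y hy hb
    have hfront : (fun i : Fin (m + 1) => (fun i : Fin (m + 2) => y i.1) i.castSucc)
        = fun i : Fin (m + 1) => y i.1 := rfl
    have hback : (fun i : Fin (m + 1) => (fun i : Fin (m + 2) => y i.1) i.succ)
        = fun i : Fin (m + 1) => (fun j => y (j + 1)) i.1 := rfl
    rw [divDiff_succ, hfront, hback,
      ih y (fun i j hij hj => hy i j hij (by omega)) (fun i hi => hb i (by omega)),
      ih (fun j => y (j + 1)) (fun i j hij hj => hy (i+1) (j+1) (by omega) (by omega))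
        (fun i hi => hb (i+1) (by omega))]
    simp only [Fin.val_last, Fin.val_zero]
    have hP : ∏ i : Fin (m + 2), (1 - lam * y i.1)
        = (∏ i : Fin (m + 1), (1 - lam * y i.1)) * (1 - lam * y (m + 1)) := by
      rw [Fin.prod_univ_castSucc]; rfl
    have hQ : ∏ i : Fin (m + 2), (1 - lam * y i.1)
        = (1 - lam * y 0) * ∏ i : Fin (m + 1), (1 - lam * y (i.1 + 1)) := by
      rw [Fin.prod_univ_succ]; rfl
    have hPf : (∏ i : Fin (m + 1), (1 - lam * y i.1)) ≠ 0 :=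
      Finset.prod_ne_zero_iff.2 (fun i _ => hb i.1 (by omega))
    have hPb : (∏ i : Fin (m + 1), (1 - lam * y (i.1 + 1))) ≠ 0 :=
      Finset.prod_ne_zero_iff.2 (fun i _ => hb (i.1 + 1) (by omega))
    have hP2 : (∏ i : Fin (m + 2), (1 - lam * y i.1)) ≠ 0 :=
      Finset.prod_ne_zero_iff.2 (fun i _ => hb i.1 (by omega))
    have hne : y 0 - y (m + 1) ≠ 0 := sub_ne_zero.2 (hy 0 (m + 1) (by omega) le_rfl)
    rw [div_eq_iff hne]
    have hrel : (∏ i : Fin (m + 1), (1 - lam * y i.1)) * (1 - lam * y (m + 1))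
        = (1 - lam * y 0) * ∏ i : Fin (m + 1), (1 - lam * y (i.1 + 1)) := by
      rw [← hP, hQ]
    rw [hP] at hP2 ⊢
    have hb1 := hb (m + 1) le_rfl
    field_simp
    linear_combination (-(lam ^ m)) * hrel

theorem geom_telescope (lam α : ℝ) (hα : 1 - lam * α ≠ 0) (t : ℝ) : ∀ k : ℕ,
    (1 - lam * t) * ∑ l ∈ Finset.range k, lam ^ l * (t - α) ^ l * ((1 - lam * α) ^ (l + 1))⁻¹
      = 1 - lam ^ k * (t - α) ^ k * ((1 - lam * α) ^ k)⁻¹ := by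
  intro k
  induction k with
  | zero => simp
  | succ k ih =>
    rw [Finset.sum_range_succ, mul_add, ih]
    have h1 : (1 - lam * α) ^ (k + 1) ≠ 0 := pow_ne_zero _ hα
    have h0 : (1 - lam * α) ^ k ≠ 0 := pow_ne_zero _ hα
    rw [pow_succ _ k, mul_inv]
    linear_combination (lam ^ k * (t - α) ^ k * ((1 - lam * α) ^ k)⁻¹) * mul_inv_cancel₀ hα

theorem integrand_decomp (k : ℕ) (lam α t : ℝ) (hlam : lam ≠ 0) (ht : 1 - lam * t ≠ 0)
    (hα : 1 - lam * α ≠ 0) :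
    (t - α) ^ k / ((1 - lam * t) * (1 - lam * α) ^ k)
      = (lam⁻¹) ^ k * (1 - lam * t)⁻¹
        - ∑ l ∈ Finset.range k,
            (lam ^ l * (lam⁻¹) ^ k * ((1 - lam * α) ^ (l + 1))⁻¹) * (t - α) ^ l := by
  have h := geom_telescope lam α hα t k
  have hk : (1 - lam * α) ^ k ≠ 0 := pow_ne_zero _ hα
  have hlk : lam ^ k ≠ 0 := pow_ne_zero _ hlam
  have hS : ∑ l ∈ Finset.range k,
        (lam ^ l * (lam⁻¹) ^ k * ((1 - lam * α) ^ (l + 1))⁻¹) * (t - α) ^ l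
      = (lam⁻¹) ^ k * ∑ l ∈ Finset.range k, lam ^ l * (t - α) ^ l * ((1 - lam * α) ^ (l + 1))⁻¹ := by
    rw [Finset.mul_sum]; exact Finset.sum_congr rfl (fun l _ => by ring)
  rw [hS]
  rw [mul_comm] at h
  have hS2 : ∑ l ∈ Finset.range k, lam ^ l * (t - α) ^ l * ((1 - lam * α) ^ (l + 1))⁻¹
      = (1 - lam ^ k * (t - α) ^ k * ((1 - lam * α) ^ k)⁻¹) / (1 - lam * t) :=
    (eq_div_iff ht).2 h
  rw [hS2, div_eq_mul_inv, mul_inv]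
  have hl : lam⁻¹ ^ k * lam ^ k = 1 := by rw [← mul_pow, inv_mul_cancel₀ hlam, one_pow]
  linear_combination (-((t - α) ^ k * ((1 - lam * α) ^ k)⁻¹ * (1 - lam * t)⁻¹)) * hl

theorem divDiff_integrand (k : ℕ) (lam α : ℝ) (hα : 1 - lam * α ≠ 0) (y : ℕ → ℝ)
    (hy : ∀ i j : ℕ, i < j → j ≤ k → y i ≠ y j)
    (hb : ∀ i ≤ k, 1 - lam * y i ≠ 0) :
    divDiff (fun t => (t - α) ^ k / ((1 - lam * t) * (1 - lam * α) ^ k)) k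
        (fun i : Fin (k + 1) => y i.1)
      = (∏ i : Fin (k + 1), (1 - lam * y i.1))⁻¹ := by
  obtain ⟨w, hw⟩ := divDiff_eq_sum k (fun i : Fin (k + 1) => y i.1)
  by_cases hlam : lam = 0
  · subst hlam
    have hfun : (fun t => (t - α) ^ k / ((1 - 0 * t) * (1 - 0 * α) ^ k))
        = fun t => (t - α) ^ k := by funext t; simp
    rw [hfun, divDiff_pow α k k y hy, if_pos le_rfl, Nat.sub_self, hp_zero]
    simp
  · -- decompose pointwise at the nodes
    rw [hw]
    have hnode : ∀ i : Fin (k + 1),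
        (y i.1 - α) ^ k / ((1 - lam * y i.1) * (1 - lam * α) ^ k)
          = (lam⁻¹) ^ k * (1 - lam * y i.1)⁻¹
            - ∑ l ∈ Finset.range k,
                (lam ^ l * (lam⁻¹) ^ k * ((1 - lam * α) ^ (l + 1))⁻¹) * (y i.1 - α) ^ l :=
      fun i => integrand_decomp k lam α (y i.1) hlam (hb i.1 (by omega)) hα
    calc ∑ i, w i * ((y i.1 - α) ^ k / ((1 - lam * y i.1) * (1 - lam * α) ^ k))
        = (lam⁻¹) ^ k * (∑ i, w i * (1 - lam * y i.1)⁻¹)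
          - ∑ l ∈ Finset.range k,
              (lam ^ l * (lam⁻¹) ^ k * ((1 - lam * α) ^ (l + 1))⁻¹)
                * ∑ i, w i * (y i.1 - α) ^ l := by
          simp only [hnode, mul_sub, Finset.mul_sum]
          rw [Finset.sum_sub_distrib, Finset.sum_comm]
          congr 1
          · exact Finset.sum_congr rfl (fun i _ => by ring)
          · exact Finset.sum_congr rfl (fun l _ => Finset.sum_congr rfl (fun i _ => by ring))
      _ = (lam⁻¹) ^ k * (lam ^ k * (∏ i : Fin (k + 1), (1 - lam * y i.1))⁻¹) - 0 := by
          rw [← hw (fun t => (1 - lam * t)⁻¹), divDiff_geom lam k y hy hb]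
          congr 1
          apply Finset.sum_eq_zero
          intro l hl
          rw [← hw (fun t => (t - α) ^ l), divDiff_pow α k l y hy,
            if_neg (by simp at hl; omega), mul_zero]
      _ = (∏ i : Fin (k + 1), (1 - lam * y i.1))⁻¹ := by
          rw [sub_zero, ← mul_assoc, ← mul_pow, inv_mul_cancel₀ hlam, one_pow, one_mul]

theorem one_sub_mul_pos {lam t : ℝ} (h1 : -1 ≤ lam) (h2 : lam ≤ 1) (h3 : -1 < t) (h4 : t < 1) :
    0 < 1 - lam * t := by
  have e1 : lam * t ≤ |lam| * |t| := abs_mul lam t ▸ le_abs_self _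
  have e2 : |lam| * |t| ≤ |t| := mul_le_of_le_one_left (abs_nonneg t) (abs_le.mpr ⟨h1, h2⟩)
  have e3 : |t| < 1 := abs_lt.mpr ⟨h3, h4⟩
  linarith

open MeasureTheory in
theorem divDiff_of_integral_representation (k : ℕ) (f : ℝ → ℝ)
    (α : ℝ) (hα : α ∈ Set.Ioo (-1 : ℝ) 1) (c : ℕ → ℝ)
    (μ : Measure ℝ) [IsFiniteMeasure μ] (hsupp : μ (Set.Icc (-1 : ℝ) 1)ᶜ = 0)
    (hrep : ∀ x ∈ Set.Ioo (-1 : ℝ) 1,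
      f x = (∑ l ∈ Finset.range k, c l * (x - α) ^ l) +
        ∫ lam in Set.Icc (-1 : ℝ) 1,
          (x - α) ^ k / ((1 - lam * x) * (1 - lam * α) ^ k) ∂μ) :
    ∀ x : Fin (k + 1) → ℝ, Function.Injective x →
      (∀ i, x i ∈ Set.Ioo (-1 : ℝ) 1) →
      divDiff f k x =
        (∫ lam in Set.Icc (-1 : ℝ) 1, (∏ i, (1 - lam * x i))⁻¹ ∂μ) ∧
      0 ≤ divDiff f k x := by
  intro x hinj hx
  -- extend the nodes to a function on ℕ
  set y : ℕ → ℝ := fun j => if h : j < k + 1 then x ⟨j, h⟩ else 0 with hydef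
  have hxy' : ∀ i : Fin (k + 1), y i.1 = x i := fun i => by
    simp [hydef, i.isLt, i.is_le]
  have hxy : (fun i : Fin (k + 1) => y i.1) = x := funext hxy'
  have hysep : ∀ i j : ℕ, i < j → j ≤ k → y i ≠ y j := by
    intro i j hij hj
    have hi' : i < k + 1 := by omega
    have hj' : j < k + 1 := by omega
    simp only [hydef, dif_pos hi', dif_pos hj']
    intro hE
    have := hinj hE
    simp only [Fin.mk.injEq] at this
    omega
  have hmem : ∀ j : ℕ, j ≤ k → y j ∈ Set.Ioo (-1 : ℝ) 1 := by
    intro j hj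
    have hj' : j < k + 1 := by omega
    simp only [hydef, dif_pos hj']
    exact hx _
  have hbpos : ∀ lam ∈ Set.Icc (-1 : ℝ) 1, ∀ i ≤ k, 0 < 1 - lam * y i := by
    intro lam hlam i hi
    exact one_sub_mul_pos hlam.1 hlam.2 (hmem i hi).1 (hmem i hi).2
  have hbne : ∀ lam ∈ Set.Icc (-1 : ℝ) 1, ∀ i ≤ k, 1 - lam * y i ≠ 0 :=
    fun lam hlam i hi => (hbpos lam hlam i hi).ne'
  have hαpos : ∀ lam ∈ Set.Icc (-1 : ℝ) 1, 0 < 1 - lam * α :=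
    fun lam hlam => one_sub_mul_pos hlam.1 hlam.2 hα.1 hα.2
  have hxpos : ∀ lam ∈ Set.Icc (-1 : ℝ) 1, ∀ i, 0 < 1 - lam * x i :=
    fun lam hlam i => one_sub_mul_pos hlam.1 hlam.2 (hx i).1 (hx i).2
  obtain ⟨w, hw⟩ := divDiff_eq_sum k x
  -- the polynomial part has vanishing k-th divided difference
  have hpow : ∀ l, l < k → divDiff (fun t => (t - α) ^ l) k x = 0 := by
    intro l hl
    have h := divDiff_pow α k l y hysep
    rw [hxy, if_neg (by omega)] at h
    exact h
  -- the divided difference of the integrand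
  have hint : ∀ lam ∈ Set.Icc (-1 : ℝ) 1,
      divDiff (fun t => (t - α) ^ k / ((1 - lam * t) * (1 - lam * α) ^ k)) k x
        = (∏ i, (1 - lam * x i))⁻¹ := by
    intro lam hlam
    have h := divDiff_integrand k lam α (hαpos lam hlam).ne' y hysep (hbne lam hlam)
    simp only [hxy'] at h
    exact h
  -- integrability of the integrand at each node
  have hInt : ∀ i : Fin (k + 1),
      IntegrableOn (fun lam => (x i - α) ^ k / ((1 - lam * x i) * (1 - lam * α) ^ k))
        (Set.Icc (-1 : ℝ) 1) μ := by
    intro i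
    apply ContinuousOn.integrableOn_compact isCompact_Icc
    apply ContinuousOn.div continuousOn_const
    · exact (Continuous.continuousOn (by fun_prop))
    · intro lam hlam
      exact mul_ne_zero (one_sub_mul_pos hlam.1 hlam.2 (hx i).1 (hx i).2).ne'
        (pow_ne_zero _ (hαpos lam hlam).ne')
  have key : divDiff f k x = ∫ lam in Set.Icc (-1 : ℝ) 1, (∏ i, (1 - lam * x i))⁻¹ ∂μ := by
    rw [hw f]
    have hfx : ∀ i : Fin (k + 1), f (x i)
        = (∑ l ∈ Finset.range k, c l * (x i - α) ^ l) +
          ∫ lam in Set.Icc (-1 : ℝ) 1,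
            (x i - α) ^ k / ((1 - lam * x i) * (1 - lam * α) ^ k) ∂μ :=
      fun i => hrep (x i) (hx i)
    calc ∑ i, w i * f (x i)
        = (∑ i, w i * ∑ l ∈ Finset.range k, c l * (x i - α) ^ l) +
          ∑ i, w i * ∫ lam in Set.Icc (-1 : ℝ) 1,
            (x i - α) ^ k / ((1 - lam * x i) * (1 - lam * α) ^ k) ∂μ := by
          simp only [hfx, mul_add, Finset.sum_add_distrib]
      _ = 0 + ∫ lam in Set.Icc (-1 : ℝ) 1, (∏ i, (1 - lam * x i))⁻¹ ∂μ := by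
          congr 1
          · simp only [Finset.mul_sum]
            rw [Finset.sum_comm]
            apply Finset.sum_eq_zero
            intro l hl
            have : ∑ i, w i * (x i - α) ^ l = 0 := by
              rw [← hw (fun t => (t - α) ^ l)]
              exact hpow l (Finset.mem_range.1 hl)
            calc ∑ i, w i * (c l * (x i - α) ^ l)
                = c l * ∑ i, w i * (x i - α) ^ l := by
                  rw [Finset.mul_sum]; exact Finset.sum_congr rfl (fun i _ => by ring)
              _ = 0 := by rw [this, mul_zero]
          · calc ∑ i, w i * ∫ lam in Set.Icc (-1 : ℝ) 1,
                  (x i - α) ^ k / ((1 - lam * x i) * (1 - lam * α) ^ k) ∂μ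
                = ∑ i, ∫ lam in Set.Icc (-1 : ℝ) 1,
                  w i * ((x i - α) ^ k / ((1 - lam * x i) * (1 - lam * α) ^ k)) ∂μ :=
                  Finset.sum_congr rfl (fun i _ => (integral_const_mul (w i) _).symm)
              _ = ∫ lam in Set.Icc (-1 : ℝ) 1, ∑ i,
                  w i * ((x i - α) ^ k / ((1 - lam * x i) * (1 - lam * α) ^ k)) ∂μ :=
                  (integral_finset_sum _ (fun i _ => (hInt i).const_mul (w i))).symm
              _ = ∫ lam in Set.Icc (-1 : ℝ) 1, (∏ i, (1 - lam * x i))⁻¹ ∂μ := by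
                  apply setIntegral_congr_fun measurableSet_Icc
                  intro lam hlam
                  calc ∑ i, w i * ((x i - α) ^ k / ((1 - lam * x i) * (1 - lam * α) ^ k))
                      = divDiff (fun t => (t - α) ^ k / ((1 - lam * t) * (1 - lam * α) ^ k)) k x :=
                        (hw (fun t => (t - α) ^ k / ((1 - lam * t) * (1 - lam * α) ^ k))).symm
                    _ = (∏ i, (1 - lam * x i))⁻¹ := hint lam hlam
      _ = ∫ lam in Set.Icc (-1 : ℝ) 1, (∏ i, (1 - lam * x i))⁻¹ ∂μ := zero_add _
  refine ⟨key, ?_⟩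
  rw [key]
  apply setIntegral_nonneg measurableSet_Icc
  intro lam hlam
  exact inv_nonneg.2 (Finset.prod_nonneg (fun i _ => (hxpos lam hlam i).le))
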